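/- Let 0 < σ < 1 and α = 2σ - 1 (so -1 < α < 1, α ≤ 0 meaning σ ≤ 1/2). For a nonnegative measurable function g on ℝ₊ and any t > 0, one has t^{-1} ∫_t^{2t} ( ∫_{u/2}^{2u} g(s)/|u-s|^{1-σ} ds )² du ≲ ∫₀^∞ g(s)² s^{α} ds, with implicit constant depending only on σ. -/

import Mathlib

open MeasureTheory Set intervalIntegral
open scoped ENNReal

lemma key_lint (σ : ℝ) (hσ0 : 0 < σ) (c R : ℝ) (hR : 0 ≤ R) :
    ∫⁻ x in Set.Ioc (c - R) (c + R), ENNReal.ofReal (|c - x| ^ (σ - 1)) ≤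
      ENNReal.ofReal (2 / σ * R ^ σ) := by
  have hb : (-1 : ℝ) < σ - 1 := by linarith
  have hrpow : IntervalIntegrable (fun x : ℝ => x ^ (σ - 1)) volume 0 R :=
    intervalIntegrable_rpow' hb
  have e1 : EqOn (fun x => |c - x| ^ (σ - 1)) (fun x => (c - x) ^ (σ - 1)) (Set.uIcc (c - R) c) := by
    intro x hx
    rw [Set.uIcc_of_le (by linarith)] at hx
    simp only
    rw [abs_of_nonneg (by linarith [hx.2])]
  have e2 : EqOn (fun x => |c - x| ^ (σ - 1)) (fun x => (x - c) ^ (σ - 1)) (Set.uIcc c (c + R)) := by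
    intro x hx
    rw [Set.uIcc_of_le (by linarith)] at hx
    simp only
    rw [abs_of_nonpos (by linarith [hx.1]), neg_sub]
  have i1 : IntervalIntegrable (fun x => |c - x| ^ (σ - 1)) volume (c - R) c := by
    have h2 : IntervalIntegrable (fun x => (c - x) ^ (σ - 1)) volume (c - 0) (c - R) :=
      hrpow.comp_sub_left c
    rw [sub_zero] at h2
    replace h2 := h2.symm
    refine h2.congr_ae ?_
    filter_upwards [ae_restrict_mem measurableSet_uIoc] with x hx
    exact (e1 (uIoc_subset_uIcc hx)).symm
  have i2 : IntervalIntegrable (fun x => |c - x| ^ (σ - 1)) volume c (c + R) := by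
    have h2 : IntervalIntegrable (fun x => (x - c) ^ (σ - 1)) volume (0 + c) (R + c) :=
      hrpow.comp_sub_right c
    rw [zero_add, add_comm R c] at h2
    refine h2.congr_ae ?_
    filter_upwards [ae_restrict_mem measurableSet_uIoc] with x hx
    exact (e2 (uIoc_subset_uIcc hx)).symm
  have iInt : IntegrableOn (fun x => |c - x| ^ (σ - 1)) (Set.Ioc (c - R) (c + R)) volume :=
    (intervalIntegrable_iff_integrableOn_Ioc_of_le (by linarith)).1 (i1.trans i2)
  rw [← ofReal_integral_eq_lintegral_ofReal iInt
      (ae_of_all _ fun x => Real.rpow_nonneg (abs_nonneg _) _)]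
  apply ENNReal.ofReal_le_ofReal
  rw [← intervalIntegral.integral_of_le (by linarith : c - R ≤ c + R),
    ← intervalIntegral.integral_add_adjacent_intervals i1 i2]
  have v1 : (∫ x in (c - R)..c, |c - x| ^ (σ - 1)) = R ^ σ / σ := by
    rw [intervalIntegral.integral_congr e1,
      intervalIntegral.integral_comp_sub_left (fun x => x ^ (σ - 1)) c, sub_self,
      sub_sub_cancel, integral_rpow (Or.inl hb), sub_add_cancel,
      Real.zero_rpow hσ0.ne', sub_zero]
  have v2 : (∫ x in c..(c + R), |c - x| ^ (σ - 1)) = R ^ σ / σ := by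
    rw [intervalIntegral.integral_congr e2,
      intervalIntegral.integral_comp_sub_right (fun x => x ^ (σ - 1)) c, sub_self,
      add_sub_cancel_left, integral_rpow (Or.inl hb), sub_add_cancel,
      Real.zero_rpow hσ0.ne', sub_zero]
  rw [v1, v2]
  rw [← add_div, div_mul_eq_mul_div, two_mul]

/-- Scalar Schur-type estimate for the local weakly singular integral: for 0 < σ < 1,
α = 2σ-1, there is C = C(σ) with
t⁻¹ ∫_t^{2t} (∫_{u/2}^{2u} g(s)|u-s|^{σ-1} ds)² du ≤ C ∫₀^∞ g(s)² s^α ds. -/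
theorem stmt_5 (σ : ℝ) (hσ : σ ∈ Set.Ioo (0 : ℝ) 1) :
    ∃ C > (0 : ℝ), ∀ g : ℝ → ℝ≥0∞, Measurable g → ∀ t > (0 : ℝ),
      ENNReal.ofReal t⁻¹ *
          ∫⁻ u in Set.Ioc t (2 * t),
            (∫⁻ s in Set.Ioc (u / 2) (2 * u),
                g s / ENNReal.ofReal (|u - s| ^ (1 - σ))) ^ 2
        ≤ ENNReal.ofReal C *
            ∫⁻ s in Set.Ioi (0 : ℝ), (g s) ^ 2 * ENNReal.ofReal (s ^ (2 * σ - 1)) := by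
  obtain ⟨hσ0, hσ1⟩ := hσ
  refine ⟨128 / σ ^ 2, by positivity, ?_⟩
  intro g hg t ht
  -- notation
  set k : ℝ → ℝ → ℝ≥0∞ := fun u s => ENNReal.ofReal (|u - s| ^ (σ - 1)) with hk
  have hkmeas : ∀ u, Measurable (fun s => k u s) := fun u =>
    ((measurable_const.sub measurable_id).abs.pow_const _).ennreal_ofReal
  have hkmeas' : ∀ s, Measurable (fun u => k u s) := fun s =>
    ((measurable_id.sub measurable_const).abs.pow_const _).ennreal_ofReal
  -- Step 0 : rewrite division as multiplication
  have hstep0 : ∀ u : ℝ,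
      (∫⁻ s in Set.Ioc (u / 2) (2 * u), g s / ENNReal.ofReal (|u - s| ^ (1 - σ)))
        = ∫⁻ s in Set.Ioc (u / 2) (2 * u), g s * k u s := by
    intro u
    apply lintegral_congr_ae
    have h0 : ∀ᵐ s ∂(volume.restrict (Set.Ioc (u / 2) (2 * u))), s ≠ u := by
      refine (ae_iff).2 ?_
      have he : {s : ℝ | ¬ s ≠ u} = {u} := by ext x; simp
      rw [he, Measure.restrict_apply (MeasurableSet.singleton u)]
      exact measure_mono_null Set.inter_subset_left (measure_singleton u)
    filter_upwards [h0] with s hs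
    have hx : 0 < |u - s| := abs_pos.2 (sub_ne_zero.2 (Ne.symm hs))
    rw [div_eq_mul_inv, ← ENNReal.ofReal_inv_of_pos (Real.rpow_pos_of_pos hx _),
      ← Real.rpow_neg hx.le, neg_sub]
  simp only [hstep0]
  -- constants
  set c1 : ℝ≥0∞ := ENNReal.ofReal (2 / σ * (2 * t) ^ σ) with hc1
  set c2 : ℝ≥0∞ := ENNReal.ofReal (2 / σ * (4 * t) ^ σ) with hc2
  set G : ℝ → ℝ≥0∞ := fun u => ∫⁻ s in Set.Ioc (u / 2) (2 * u), (g s) ^ 2 * k u s with hG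
  have hsq : ∀ Z : ℝ≥0∞, (Z ^ ((1:ℝ)/2)) ^ (2:ℕ) = Z := by
    intro Z
    rw [← ENNReal.rpow_natCast (Z ^ ((1:ℝ)/2)) 2, ← ENNReal.rpow_mul]
    norm_num
  -- Step 1 : Cauchy-Schwarz for each u
  have holder : ∀ u ∈ Set.Ioc t (2 * t),
      (∫⁻ s in Set.Ioc (u / 2) (2 * u), g s * k u s) ^ 2 ≤ c1 * G u := by
    intro u hu
    have hu0 : 0 < u := lt_trans ht hu.1
    set S := Set.Ioc (u / 2) (2 * u)
    set jf : ℝ → ℝ≥0∞ := fun s => ENNReal.ofReal (|u - s| ^ ((σ - 1)/2)) with hjf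
    have hjmeas : Measurable jf :=
      ((measurable_const.sub measurable_id).abs.pow_const _).ennreal_ofReal
    have hjj : ∀ s, jf s * jf s = k u s := by
      intro s
      rw [hjf, hk]
      simp only
      rw [← ENNReal.ofReal_mul (Real.rpow_nonneg (abs_nonneg _) _),
        ← Real.rpow_add' (abs_nonneg _) (by rw [add_halves]; exact sub_ne_zero.2 hσ1.ne),
        add_halves]
    have hpt : ∀ s, g s * k u s = ((g * jf) * jf) s := by
      intro s
      simp only [Pi.mul_apply, mul_assoc, hjj]
    have h22 : Real.HolderConjugate 2 2 := Real.HolderConjugate.two_two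
    have hH := ENNReal.lintegral_mul_le_Lp_mul_Lq (volume.restrict S) h22
      (hg.mul hjmeas).aemeasurable hjmeas.aemeasurable
    set X := ∫⁻ s in S, ((g * jf) s) ^ (2:ℝ) with hX
    set Y := ∫⁻ s in S, (jf s) ^ (2:ℝ) with hY
    have h1 : (∫⁻ s in S, g s * k u s) ≤ X ^ ((1:ℝ)/2) * Y ^ ((1:ℝ)/2) := by
      rw [lintegral_congr hpt]
      exact hH
    have h2 : (∫⁻ s in S, g s * k u s) ^ (2:ℕ) ≤ X * Y := by
      calc (∫⁻ s in S, g s * k u s) ^ (2:ℕ)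
          ≤ (X ^ ((1:ℝ)/2) * Y ^ ((1:ℝ)/2)) ^ (2:ℕ) := pow_le_pow_left₀ (by positivity) h1 2
        _ = X * Y := by rw [mul_pow, hsq, hsq]
    have hXG : X = G u := by
      rw [hX, hG]
      refine lintegral_congr fun s => ?_
      rw [show ((2:ℝ)) = ((2:ℕ) : ℝ) by norm_num, ENNReal.rpow_natCast, Pi.mul_apply,
        mul_pow, sq (jf s), hjj]
    have hYc : Y ≤ c1 := by
      have hsub : S ⊆ Set.Ioc (u - u) (u + u) := by
        rw [sub_self]
        exact Set.Ioc_subset_Ioc (by linarith) (by linarith)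
      calc Y = ∫⁻ s in S, k u s := by
              refine lintegral_congr fun s => ?_
              rw [show ((2:ℝ)) = ((2:ℕ) : ℝ) by norm_num, ENNReal.rpow_natCast,
                sq (jf s), hjj]
        _ ≤ ∫⁻ s in Set.Ioc (u - u) (u + u), k u s := lintegral_mono_set hsub
        _ ≤ ENNReal.ofReal (2 / σ * u ^ σ) := key_lint σ hσ0 u u hu0.le
        _ ≤ c1 := by
              apply ENNReal.ofReal_le_ofReal
              have : u ^ σ ≤ (2 * t) ^ σ := Real.rpow_le_rpow hu0.le hu.2 hσ0.le
              have h2σ : (0:ℝ) ≤ 2 / σ := by positivity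
              nlinarith
    calc (∫⁻ s in S, g s * k u s) ^ 2 ≤ X * Y := h2
      _ ≤ X * c1 := mul_le_mul_right hYc X
      _ = c1 * G u := by rw [hXG, mul_comm]
  -- Step 2 : integrate in u, Fubini
  set E : Set (ℝ × ℝ) := {p | p.1 / 2 < p.2 ∧ p.2 ≤ 2 * p.1} with hE
  have hEmeas : MeasurableSet E :=
    (measurableSet_lt (measurable_fst.div_const 2) measurable_snd).inter
      (measurableSet_le measurable_snd (measurable_fst.const_mul 2))
  set Fp : ℝ × ℝ → ℝ≥0∞ := fun p => (g p.2) ^ 2 * k p.1 p.2 with hFp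
  have hFpmeas : Measurable Fp :=
    ((hg.comp measurable_snd).pow_const 2).mul
      (((measurable_fst.sub measurable_snd).abs.pow_const _).ennreal_ofReal)
  have hGind : ∀ u : ℝ, G u = ∫⁻ s, E.indicator Fp (u, s) := by
    intro u
    simp only [hG]
    rw [← lintegral_indicator measurableSet_Ioc]
    refine lintegral_congr fun s => ?_
    by_cases hs : u / 2 < s ∧ s ≤ 2 * u
    · rw [Set.indicator_of_mem (Set.mem_Ioc.2 hs), Set.indicator_of_mem (by exact hs)]
    · rw [Set.indicator_of_notMem (fun h => hs (Set.mem_Ioc.1 h)),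
        Set.indicator_of_notMem (by exact hs)]
  have hswap : ∫⁻ u in Set.Ioc t (2 * t), G u
      = ∫⁻ s, ∫⁻ u in Set.Ioc t (2 * t), E.indicator Fp (u, s) := by
    simp only [hGind]
    exact lintegral_lintegral_swap (hFpmeas.indicator hEmeas).aemeasurable
  -- Step 3 : bound the inner u-integral
  have hinner : ∀ s : ℝ, (∫⁻ u in Set.Ioc t (2 * t), E.indicator Fp (u, s))
      ≤ (Set.Ioc (t / 2) (4 * t)).indicator (fun s => (g s) ^ 2 * c2) s := by
    intro s
    by_cases hs : s ∈ Set.Ioc (t / 2) (4 * t)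
    · rw [Set.indicator_of_mem hs]
      have hs0 : 0 < s := lt_trans (by linarith) hs.1
      calc (∫⁻ u in Set.Ioc t (2 * t), E.indicator Fp (u, s))
          ≤ ∫⁻ u in Set.Ioc t (2 * t), Fp (u, s) :=
            lintegral_mono fun u => Set.indicator_le_self _ _ _
        _ = (g s) ^ 2 * ∫⁻ u in Set.Ioc t (2 * t), k u s := by
            simp only [hFp]
            exact lintegral_const_mul _ (hkmeas' s)
        _ ≤ (g s) ^ 2 * c2 := by
            refine mul_le_mul_right ?_ _
            calc (∫⁻ u in Set.Ioc t (2 * t), k u s)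
                ≤ ∫⁻ u in Set.Ioc (s - 4 * t) (s + 4 * t), k u s :=
                  lintegral_mono_set (Set.Ioc_subset_Ioc (by linarith [hs.2]) (by linarith [hs.1]))
              _ = ∫⁻ u in Set.Ioc (s - 4 * t) (s + 4 * t), ENNReal.ofReal (|s - u| ^ (σ - 1)) := by
                  refine lintegral_congr fun u => ?_
                  rw [hk]
                  simp only [abs_sub_comm]
              _ ≤ c2 := key_lint σ hσ0 s (4 * t) (by linarith)
    · rw [Set.indicator_of_notMem hs]
      have hz : ∀ᵐ u ∂(volume.restrict (Set.Ioc t (2 * t))),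
          E.indicator Fp (u, s) = 0 := by
        filter_upwards [ae_restrict_mem measurableSet_Ioc] with u hu
        apply Set.indicator_of_notMem
        intro hmem
        exact hs ⟨by simp only [hE, Set.mem_setOf_eq] at hmem; linarith [hmem.1, hu.1],
          by simp only [hE, Set.mem_setOf_eq] at hmem; linarith [hmem.2, hu.2]⟩
      rw [lintegral_congr_ae hz, lintegral_zero]
  -- assemble
  set ct : ℝ := t⁻¹ * ((2 / σ * (2 * t) ^ σ) * (2 / σ * (4 * t) ^ σ)) with hct
  have hmain : ENNReal.ofReal t⁻¹ * ∫⁻ u in Set.Ioc t (2 * t),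
      (∫⁻ s in Set.Ioc (u / 2) (2 * u), g s * k u s) ^ 2
      ≤ ∫⁻ s in Set.Ioc (t / 2) (4 * t), (g s) ^ 2 * ENNReal.ofReal ct := by
    have step2 : (∫⁻ u in Set.Ioc t (2 * t),
        (∫⁻ s in Set.Ioc (u / 2) (2 * u), g s * k u s) ^ 2)
        ≤ c1 * ∫⁻ u in Set.Ioc t (2 * t), G u := by
      rw [← lintegral_const_mul' _ _ ENNReal.ofReal_ne_top]
      refine lintegral_mono_ae ?_
      filter_upwards [ae_restrict_mem measurableSet_Ioc] with u hu
      exact holder u hu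
    calc ENNReal.ofReal t⁻¹ * ∫⁻ u in Set.Ioc t (2 * t),
          (∫⁻ s in Set.Ioc (u / 2) (2 * u), g s * k u s) ^ 2
        ≤ ENNReal.ofReal t⁻¹ * (c1 * ∫⁻ u in Set.Ioc t (2 * t), G u) :=
          mul_le_mul_right step2 _
      _ = ENNReal.ofReal t⁻¹ * (c1 * ∫⁻ s, ∫⁻ u in Set.Ioc t (2 * t), E.indicator Fp (u, s)) := by
          rw [hswap]
      _ ≤ ENNReal.ofReal t⁻¹ * (c1 *
            ∫⁻ s, (Set.Ioc (t / 2) (4 * t)).indicator (fun s => (g s) ^ 2 * c2) s) :=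
          mul_le_mul_right (mul_le_mul_right (lintegral_mono hinner) _) _
      _ = (ENNReal.ofReal t⁻¹ * c1) *
            ∫⁻ s in Set.Ioc (t / 2) (4 * t), (g s) ^ 2 * c2 := by
          rw [lintegral_indicator measurableSet_Ioc, mul_assoc]
      _ = ∫⁻ s in Set.Ioc (t / 2) (4 * t), (ENNReal.ofReal t⁻¹ * c1) * ((g s) ^ 2 * c2) := by
          rw [lintegral_const_mul' _ _ (ENNReal.mul_ne_top ENNReal.ofReal_ne_top
            ENNReal.ofReal_ne_top)]
      _ = ∫⁻ s in Set.Ioc (t / 2) (4 * t), (g s) ^ 2 * ENNReal.ofReal ct := by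
          refine lintegral_congr fun s => ?_
          rw [hc1, hc2, hct, ← ENNReal.ofReal_mul (by positivity), mul_left_comm,
            ← ENNReal.ofReal_mul (by positivity), mul_assoc]
  -- pointwise comparison of constants
  have hptwise : ∀ s ∈ Set.Ioc (t / 2) (4 * t), ct ≤ 128 / σ ^ 2 * s ^ (2 * σ - 1) := by
    intro s hs
    have hs0 : 0 < s := lt_trans (by linarith) hs.1
    have h2σ : (2:ℝ) ^ σ ≤ 2 := by
      calc (2:ℝ) ^ σ ≤ (2:ℝ) ^ (1:ℝ) :=
        Real.rpow_le_rpow_of_exponent_le one_le_two hσ1.le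
      _ = 2 := Real.rpow_one 2
    have h4σ : (4:ℝ) ^ σ ≤ 4 := by
      calc (4:ℝ) ^ σ ≤ (4:ℝ) ^ (1:ℝ) :=
        Real.rpow_le_rpow_of_exponent_le (by norm_num) hσ1.le
      _ = 4 := Real.rpow_one 4
    have hts : t ^ (2 * σ - 1) ≤ 4 * s ^ (2 * σ - 1) := by
      rcases le_or_gt 0 (2 * σ - 1) with ha | ha
      · have h1 : t ≤ 2 * s := by linarith [hs.1]
        calc t ^ (2 * σ - 1) ≤ (2 * s) ^ (2 * σ - 1) := Real.rpow_le_rpow ht.le h1 ha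
          _ = 2 ^ (2 * σ - 1) * s ^ (2 * σ - 1) := Real.mul_rpow (by norm_num) hs0.le
          _ ≤ 2 * s ^ (2 * σ - 1) := by
              have h2 : (2:ℝ) ^ (2 * σ - 1) ≤ 2 := by
                calc (2:ℝ) ^ (2 * σ - 1) ≤ (2:ℝ) ^ (1:ℝ) :=
                  Real.rpow_le_rpow_of_exponent_le one_le_two (by linarith)
                _ = 2 := Real.rpow_one 2
              exact mul_le_mul_of_nonneg_right h2 (Real.rpow_nonneg hs0.le _)
          _ ≤ 4 * s ^ (2 * σ - 1) :=
              mul_le_mul_of_nonneg_right (by norm_num) (Real.rpow_nonneg hs0.le _)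
      · have h1 : s / 4 ≤ t := by linarith [hs.2]
        have h14 : (0:ℝ) < s / 4 := by linarith
        calc t ^ (2 * σ - 1) ≤ (s / 4) ^ (2 * σ - 1) :=
              Real.rpow_le_rpow_of_nonpos h14 h1 ha.le
          _ = s ^ (2 * σ - 1) / 4 ^ (2 * σ - 1) := Real.div_rpow hs0.le (by norm_num : (0:ℝ) ≤ 4) _
          _ = s ^ (2 * σ - 1) * ((4:ℝ) ^ (2 * σ - 1))⁻¹ := by rw [div_eq_mul_inv]
          _ = s ^ (2 * σ - 1) * (4:ℝ) ^ (-(2 * σ - 1)) := by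
              rw [Real.rpow_neg (by norm_num)]
          _ ≤ s ^ (2 * σ - 1) * 4 := by
              refine mul_le_mul_of_nonneg_left ?_ (Real.rpow_nonneg hs0.le _)
              calc (4:ℝ) ^ (-(2 * σ - 1)) ≤ (4:ℝ) ^ (1:ℝ) :=
                Real.rpow_le_rpow_of_exponent_le (by norm_num) (by linarith)
              _ = 4 := Real.rpow_one 4
          _ = 4 * s ^ (2 * σ - 1) := mul_comm _ _
    have hexp : t⁻¹ * (t ^ σ * t ^ σ) = t ^ (2 * σ - 1) := by
      rw [← Real.rpow_neg_one t, ← Real.rpow_add ht, ← Real.rpow_add ht]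
      congr 1
      ring
    have hexpand : ct = (2 / σ * (2 / σ)) * ((2:ℝ) ^ σ * (4:ℝ) ^ σ)
        * (t⁻¹ * (t ^ σ * t ^ σ)) := by
      rw [hct, Real.mul_rpow (by norm_num) ht.le, Real.mul_rpow (by norm_num) ht.le]
      ring
    rw [hexpand, hexp]
    have hb1 : (2:ℝ) ^ σ * (4:ℝ) ^ σ ≤ 8 := by
      nlinarith [Real.rpow_nonneg (show (0:ℝ) ≤ 2 by norm_num) σ,
        Real.rpow_nonneg (show (0:ℝ) ≤ 4 by norm_num) σ]
    have hA : (0:ℝ) ≤ 2 / σ * (2 / σ) := by positivity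
    calc (2 / σ * (2 / σ)) * ((2:ℝ) ^ σ * (4:ℝ) ^ σ) * t ^ (2 * σ - 1)
        ≤ (2 / σ * (2 / σ)) * 8 * (4 * s ^ (2 * σ - 1)) := by
          refine mul_le_mul (mul_le_mul_of_nonneg_left hb1 hA) hts
            (Real.rpow_nonneg ht.le _) (by positivity)
      _ = 128 / σ ^ 2 * s ^ (2 * σ - 1) := by
          field_simp
          ring
  -- finish
  refine hmain.trans ?_
  calc (∫⁻ s in Set.Ioc (t / 2) (4 * t), (g s) ^ 2 * ENNReal.ofReal ct)
      ≤ ∫⁻ s in Set.Ioc (t / 2) (4 * t),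
          (g s) ^ 2 * ENNReal.ofReal (128 / σ ^ 2 * s ^ (2 * σ - 1)) := by
        refine lintegral_mono_ae ?_
        filter_upwards [ae_restrict_mem measurableSet_Ioc] with s hs
        exact mul_le_mul_right (ENNReal.ofReal_le_ofReal (hptwise s hs)) _
    _ = ∫⁻ s in Set.Ioc (t / 2) (4 * t),
          ENNReal.ofReal (128 / σ ^ 2) * ((g s) ^ 2 * ENNReal.ofReal (s ^ (2 * σ - 1))) := by
        refine lintegral_congr fun s => ?_
        rw [ENNReal.ofReal_mul (by positivity), mul_left_comm]
    _ = ENNReal.ofReal (128 / σ ^ 2) *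
          ∫⁻ s in Set.Ioc (t / 2) (4 * t), (g s) ^ 2 * ENNReal.ofReal (s ^ (2 * σ - 1)) :=
        lintegral_const_mul' _ _ ENNReal.ofReal_ne_top
    _ ≤ ENNReal.ofReal (128 / σ ^ 2) *
          ∫⁻ s in Set.Ioi (0:ℝ), (g s) ^ 2 * ENNReal.ofReal (s ^ (2 * σ - 1)) := by
        refine mul_le_mul_right (lintegral_mono_set ?_) _
        intro x hx
        exact lt_trans (by linarith) hx.1
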